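/- Let B be any linear operator on ℋ. Then for every ψ₀ ∈ S(ℋ), the time average of t ↦ ⟨ψ_t|B|ψ_t⟩ exists and equals M_{ψ₀B}, i.e., lim_{T→∞} (1/T)∫₀^T ⟨ψ_t|B|ψ_t⟩ dt = M_{ψ₀B}; and for every macro state μ, M_{μB} = ∫_{S(ℋ_μ)} M_{ψ₀B} u_μ(dψ₀), i.e., M_{μB} is the average of M_{ψ₀B} over ψ₀ distributed according to the normalized uniform measure u_μ on S(ℋ_μ). -/

import Mathlib

open Matrix MeasureTheory ProbabilityTheory Filter Finset
open scoped ComplexOrder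

noncomputable section

namespace GNT

variable {D : ℕ}

instance : MeasurableSpace (EuclideanSpace ℂ (Fin D)) :=
  MeasurableSpace.comap (WithLp.equiv 2 (Fin D → ℂ)) MeasurableSpace.pi

/-- outer product `|v⟩⟨v|` -/
def outer (v : EuclideanSpace ℂ (Fin D)) : Matrix (Fin D) (Fin D) ℂ :=
  Matrix.of fun i j => v i * (starRingEnd ℂ) (v j)

/-- `⟨ψ|B|ψ⟩` -/
def sandwich (B : Matrix (Fin D) (Fin D) ℂ) (ψ : EuclideanSpace ℂ (Fin D)) : ℂ :=
  ∑ j, (starRingEnd ℂ) (ψ j) * B.mulVec (fun k => ψ k) j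

/-- `ψ_t = e^{-iHt} ψ` -/
def timeEvol (H : Matrix (Fin D) (Fin D) ℂ) (t : ℝ) (ψ : EuclideanSpace ℂ (Fin D)) :
    EuclideanSpace ℂ (Fin D) :=
  (WithLp.equiv 2 (Fin D → ℂ)).symm
    ((NormedSpace.exp ((-(Complex.I * (t : ℂ))) • H)).mulVec fun k => ψ k)

/-- the eigenprojection `Π_e` of a Hermitian matrix -/
def eigProj (H : Matrix (Fin D) (Fin D) ℂ) (hH : H.IsHermitian) (e : ℝ) :
    Matrix (Fin D) (Fin D) ℂ :=
  ∑ n : Fin D, if hH.eigenvalues n = e then outer (hH.eigenvectorBasis n) else 0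

/-- the set `ℰ` of distinct eigenvalues -/
def eigSet (H : Matrix (Fin D) (Fin D) ℂ) (hH : H.IsHermitian) : Finset ℝ :=
  Finset.univ.image hH.eigenvalues

/-- `M_{μB} = (1/d_μ) ∑_e tr(P_μ Π_e B Π_e)` -/
def MmuB (H : Matrix (Fin D) (Fin D) ℂ) (hH : H.IsHermitian)
    (Pmu B : Matrix (Fin D) (Fin D) ℂ) (dmu : ℕ) : ℂ :=
  (dmu : ℂ)⁻¹ * ∑ e ∈ eigSet H hH, (Pmu * eigProj H hH e * B * eigProj H hH e).trace

/-- `M_{ψB} = ∑_e tr(|ψ⟩⟨ψ| Π_e B Π_e)` -/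
def MpsiB (H : Matrix (Fin D) (Fin D) ℂ) (hH : H.IsHermitian)
    (ψ : EuclideanSpace ℂ (Fin D)) (B : Matrix (Fin D) (Fin D) ℂ) : ℂ :=
  ∑ e ∈ eigSet H hH, (outer ψ * eigProj H hH e * B * eigProj H hH e).trace

/-- `M_{μB}` for a possibly non-Hermitian argument (junk value otherwise) -/
def MmuBd (H Pmu B : Matrix (Fin D) (Fin D) ℂ) (dmu : ℕ) : ℂ :=
  if hH : H.IsHermitian then MmuB H hH Pmu B dmu else 0

/-- `M_{μν}` as a real number -/
def Mmunud (H Pmu Pnu : Matrix (Fin D) (Fin D) ℂ) (dmu : ℕ) : ℝ :=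
  (MmuBd H Pmu Pnu dmu).re

/-- `M_{ψν}` as a real number -/
def MpsiNud (H : Matrix (Fin D) (Fin D) ℂ) (ψ : EuclideanSpace ℂ (Fin D))
    (Pnu : Matrix (Fin D) (Fin D) ℂ) : ℝ :=
  if hH : H.IsHermitian then (MpsiB H hH ψ Pnu).re else 0

/-- maximal degeneracy `D_E` of an eigenvalue -/
def DE (H : Matrix (Fin D) (Fin D) ℂ) (hH : H.IsHermitian) : ℕ :=
  Finset.univ.sup fun n : Fin D =>
    (Finset.univ.filter fun m : Fin D => hH.eigenvalues m = hH.eigenvalues n).card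

/-- maximal number `G(κ)` of eigenvalue gaps in an interval of length `κ` -/
def Gkappa (E : Finset ℝ) (κ : ℝ) : ℕ :=
  sSup {k : ℕ | ∃ x : ℝ, k =
    ((E ×ˢ E).filter fun p => p.1 ≠ p.2 ∧ x ≤ p.1 - p.2 ∧ p.1 - p.2 < x + κ).card}

/-- maximal gap degeneracy `D_G = lim_{κ→0⁺} G(κ)` -/
def DG (E : Finset ℝ) : ℕ :=
  sInf {k : ℕ | ∃ κ : ℝ, 0 < κ ∧ k = Gkappa E κ}

/-- ℓ²→ℓ² operator norm of a complex matrix -/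
def opNorm (B : Matrix (Fin D) (Fin D) ℂ) : ℝ :=
  ‖Matrix.toEuclideanCLM (𝕜 := ℂ) B‖

/-- ℓ²→ℓ² operator norm of a real matrix -/
def opNormR (B : Matrix (Fin D) (Fin D) ℝ) : ℝ :=
  ‖Matrix.toEuclideanCLM (𝕜 := ℝ) B‖

/-- `tr |B|` where `|B| = (B^*B)^{1/2}` -/
def traceAbs (B : Matrix (Fin D) (Fin D) ℂ) : ℝ :=
  (((Matrix.isHermitian_conjTranspose_mul_self B).eigenvectorUnitary : Matrix (Fin D) (Fin D) ℂ) *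
    Matrix.diagonal ((fun x : ℝ => (x : ℂ)) ∘ Real.sqrt ∘ (Matrix.isHermitian_conjTranspose_mul_self B).eigenvalues) *
    (star (Matrix.isHermitian_conjTranspose_mul_self B).eigenvectorUnitary :
      Matrix (Fin D) (Fin D) ℂ)).trace.re

/-- `tr(B⁺)` -/
def trPos (B : Matrix (Fin D) (Fin D) ℂ) : ℝ :=
  if hB : B.IsHermitian then ∑ n : Fin D, max (hB.eigenvalues n) 0 else 0

/-- `tr(B⁻)` -/
def trNeg (B : Matrix (Fin D) (Fin D) ℂ) : ℝ :=
  if hB : B.IsHermitian then ∑ n : Fin D, max (-hB.eigenvalues n) 0 else 0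

/-- `b⁺_min`, smallest eigenvalue of `B⁺` -/
def bPosMin (B : Matrix (Fin D) (Fin D) ℂ) : ℝ :=
  if hB : B.IsHermitian then sInf (Set.range fun n : Fin D => max (hB.eigenvalues n) 0) else 0

/-- `b⁺_max`, largest eigenvalue of `B⁺` -/
def bPosMax (B : Matrix (Fin D) (Fin D) ℂ) : ℝ :=
  if hB : B.IsHermitian then sSup (Set.range fun n : Fin D => max (hB.eigenvalues n) 0) else 0

/-- `b⁻_min`, smallest eigenvalue of `B⁻` -/
def bNegMin (B : Matrix (Fin D) (Fin D) ℂ) : ℝ :=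
  if hB : B.IsHermitian then sInf (Set.range fun n : Fin D => max (-hB.eigenvalues n) 0) else 0

/-- `b⁻_max`, largest eigenvalue of `B⁻` -/
def bNegMax (B : Matrix (Fin D) (Fin D) ℂ) : ℝ :=
  if hB : B.IsHermitian then sSup (Set.range fun n : Fin D => max (-hB.eigenvalues n) 0) else 0

/-- the coordinate projection matrix associated with a set of standard basis vectors -/
def projMat (I : Finset (Fin D)) : Matrix (Fin D) (Fin D) ℂ :=
  Matrix.diagonal fun j => if j ∈ I then 1 else 0

/-- a family of index sets forms a partition of the coordinates -/
def IsPartition {ι : Type*} (Iset : ι → Finset (Fin D)) : Prop :=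
  ∀ j : Fin D, ∃! ν, j ∈ Iset ν

/-- an orthogonal decomposition `ℋ = ⊕_ν ℋ_ν` given by projections `P ν` with `dim ℋ_ν = d ν` -/
def IsOrthDecomp {ι : Type*} [Fintype ι] (P : ι → Matrix (Fin D) (Fin D) ℂ) (d : ι → ℕ) : Prop :=
  (∀ ν, (P ν).IsHermitian) ∧ (∀ ν, P ν * P ν = P ν) ∧
  (∀ μ ν, μ ≠ ν → P μ * P ν = 0) ∧ (∑ ν, P ν = 1) ∧ (∀ ν, (P ν).trace = (d ν : ℂ))

/-- the unit sphere of the range of `P`, as a subset of `ℂ^D` -/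
def sphereOf (Pmu : Matrix (Fin D) (Fin D) ℂ) : Set (EuclideanSpace ℂ (Fin D)) :=
  {ψ | ‖ψ‖ = 1 ∧ ∀ j, Pmu.mulVec (fun k => ψ k) j = ψ j}

/-- `u` is the normalized uniform measure on the unit sphere of the range of `Pmu`:
a probability measure carried by that sphere and invariant under every unitary
commuting with `Pmu`. -/
def IsUniformOn (Pmu : Matrix (Fin D) (Fin D) ℂ)
    (u : Measure (EuclideanSpace ℂ (Fin D))) : Prop :=
  IsProbabilityMeasure u ∧ u (sphereOf Pmu) = 1 ∧
  ∀ U ∈ Matrix.unitaryGroup (Fin D) ℂ,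
    (U : Matrix (Fin D) (Fin D) ℂ) * Pmu = Pmu * (U : Matrix (Fin D) (Fin D) ℂ) →
    Measure.map (fun ψ : EuclideanSpace ℂ (Fin D) =>
      (WithLp.equiv 2 (Fin D → ℂ)).symm
        ((U : Matrix (Fin D) (Fin D) ℂ).mulVec fun k => ψ k)) u = u

/-- `(1-δ)`-most `t ∈ [0,T]` belong to `s` -/
def MostIcc (δ T : ℝ) (s : Set ℝ) : Prop :=
  ENNReal.ofReal ((1 - δ) * T) ≤ volume (s ∩ Set.Icc 0 T)

/-- `(1-δ)`-most `t ∈ [0,∞)` belong to `s` -/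
def MostInfty (δ : ℝ) (s : Set ℝ) : Prop :=
  (1 - δ) ≤ liminf (fun T : ℝ => (volume (s ∩ Set.Icc 0 T)).toReal / T) atTop

/-- `w_{μB}(t) = (1/d_μ) tr(P_μ e^{iHt} B e^{-iHt})` -/
def wmuB (H B Pmu : Matrix (Fin D) (Fin D) ℂ) (dmu : ℕ) (t : ℝ) : ℂ :=
  (dmu : ℂ)⁻¹ * (Pmu * NormedSpace.exp ((Complex.I * (t : ℂ)) • H) * B *
    NormedSpace.exp ((-(Complex.I * (t : ℂ))) • H)).trace

/-- norm of restriction of coordinates: `‖v_I‖` -/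
def pnorm (v : Fin D → ℂ) (I : Finset (Fin D)) : ℝ :=
  Real.sqrt (∑ j ∈ I, ‖v j‖ ^ 2)

/-- `v` is an eigenvector of `H` -/
def IsEigenvector (H : Matrix (Fin D) (Fin D) ℂ) (v : Fin D → ℂ) : Prop :=
  v ≠ 0 ∧ ∃ c : ℂ, H.mulVec v = c • v

/-- `C_{H₀} = D^{-1/2} max{‖Re H₀‖, ‖Im H₀‖}` -/
def CH0 (H0 : Matrix (Fin D) (Fin D) ℂ) : ℝ :=
  (Real.sqrt D)⁻¹ * max (opNormR (Matrix.of fun i j => (H0 i j).re))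
    (opNormR (Matrix.of fun i j => (H0 i j).im))

/-- `σ₋ = min_{i,j} σ_ij` -/
def sigMin (σ : Fin D → Fin D → ℝ) : ℝ := sInf (Set.range fun p : Fin D × Fin D => σ p.1 p.2)

/-- `σ₊ = max_{i,j} σ_ij` -/
def sigMax (σ : Fin D → Fin D → ℝ) : ℝ := sSup (Set.range fun p : Fin D × Fin D => σ p.1 p.2)

/-- the random Gaussian perturbation `V = (A+A^*)/√2` -/
def VofA (Aw : Matrix (Fin D) (Fin D) ℂ) : Matrix (Fin D) (Fin D) ℂ :=
  ((Real.sqrt 2 : ℂ))⁻¹ • (Aw + Awᴴ)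

/-- Assumption A: the entries of `A` are independent centered Gaussians with
variances `σ_ij²/2` for real and imaginary parts, and `σ` is symmetric and positive. -/
def AssumpA {Ω : Type*} [MeasurableSpace Ω] (P : Measure Ω)
    (A : Ω → Matrix (Fin D) (Fin D) ℂ) (σ : Fin D → Fin D → ℝ) : Prop :=
  (∀ i j, 0 < σ i j) ∧ (∀ i j, σ i j = σ j i) ∧
  iIndepFun
    (fun x : (Fin D × Fin D) ⊕ (Fin D × Fin D) =>
      Sum.elim (fun p (ω : Ω) => (A ω p.1 p.2).re) (fun p ω => (A ω p.1 p.2).im) x) P ∧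
  (∀ i j, Measure.map (fun ω => (A ω i j).re) P = gaussianReal 0 (Real.toNNReal (σ i j ^ 2 / 2))) ∧
  (∀ i j, Measure.map (fun ω => (A ω i j).im) P = gaussianReal 0 (Real.toNNReal (σ i j ^ 2 / 2)))

/-- Assumption B: the entries `(Re h_ij)_{i≤j}` and `(Im h_ij)_{i<j}` of the random
Hermitian matrix `H` are mutually independent and continuously distributed, and the
densities of the real parts are bounded by `K`. -/
def AssumpB {Ω : Type*} [MeasurableSpace Ω] (P : Measure Ω)
    (H : Ω → Matrix (Fin D) (Fin D) ℂ) (K : ℝ) : Prop :=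
  (∀ ω, (H ω).IsHermitian) ∧
  iIndepFun
    (fun x : ({p : Fin D × Fin D // p.1 ≤ p.2} ⊕ {p : Fin D × Fin D // p.1 < p.2}) =>
      Sum.elim (fun p (ω : Ω) => (H ω p.1.1 p.1.2).re)
        (fun p ω => (H ω p.1.1 p.1.2).im) x) P ∧
  (∀ i j : Fin D, i ≤ j → Measure.map (fun ω => (H ω i j).re) P ≪ volume) ∧
  (∀ i j : Fin D, i < j → Measure.map (fun ω => (H ω i j).im) P ≪ volume) ∧
  (∀ i j : Fin D, i ≤ j →
    Measure.map (fun ω => (H ω i j).re) P ≤ ENNReal.ofReal K • volume)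

/-- the set of distinct eigenvalues, junk value `∅` for non-Hermitian matrices -/
def eigSetd (H : Matrix (Fin D) (Fin D) ℂ) : Finset ℝ :=
  if hH : H.IsHermitian then eigSet H hH else ∅

/-- `M_{ψB}` for a possibly non-Hermitian matrix (junk value otherwise) -/
def MpsiBd (H : Matrix (Fin D) (Fin D) ℂ) (ψ : EuclideanSpace ℂ (Fin D))
    (B : Matrix (Fin D) (Fin D) ℂ) : ℂ :=
  if hH : H.IsHermitian then MpsiB H hH ψ B else 0

end GNT
namespace GNTAux
open GNT Matrix MeasureTheory Filter Finset Complex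

section

variable {D : ℕ}

/-- rank-one matrix `|x⟩⟨y|` -/
def ro (x y : Fin D → ℂ) : Matrix (Fin D) (Fin D) ℂ :=
  Matrix.of fun i j => x i * (starRingEnd ℂ) (y j)

/-- `⟨x|y⟩` -/
def dot (x y : Fin D → ℂ) : ℂ := ∑ k, (starRingEnd ℂ) (x k) * y k

lemma dot_conj (x y : Fin D → ℂ) : dot x y = (starRingEnd ℂ) (dot y x) := by
  simp [dot, mul_comm]

lemma mul_ro (M : Matrix (Fin D) (Fin D) ℂ) (x y : Fin D → ℂ) :
    M * ro x y = ro (M *ᵥ x) y := by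
  ext i j
  simp only [Matrix.mul_apply, ro, Matrix.of_apply, Matrix.mulVec, dotProduct,
    Finset.sum_mul]
  exact Finset.sum_congr rfl fun k _ => by ring

lemma ro_mul (M : Matrix (Fin D) (Fin D) ℂ) (x y : Fin D → ℂ) :
    ro x y * M = ro x (Mᴴ *ᵥ y) := by
  ext i j
  simp only [Matrix.mul_apply, ro, Matrix.of_apply, Matrix.mulVec, dotProduct,
    Matrix.conjTranspose_apply, Complex.star_def, map_sum, _root_.map_mul, RingHomCompTriple.comp_apply, RingHom.id_apply, Finset.mul_sum, starRingEnd_self_apply]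
  exact Finset.sum_congr rfl fun k _ => by ring

lemma ro_mul_ro (x y z w : Fin D → ℂ) : ro x y * ro z w = dot y z • ro x w := by
  ext i j
  simp only [Matrix.mul_apply, ro, Matrix.of_apply, Matrix.smul_apply, dot, smul_eq_mul,
    Finset.sum_mul]
  exact Finset.sum_congr rfl fun k _ => by ring

lemma trace_ro (x y : Fin D → ℂ) : (ro x y).trace = dot y x := by
  simp [ro, dot, Matrix.trace, Matrix.diag, mul_comm]

lemma ro_mulVec (x y ψ : Fin D → ℂ) : ro x y *ᵥ ψ = dot y ψ • x := by
  ext i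
  simp only [Matrix.mulVec, dotProduct, ro, Matrix.of_apply, dot, Pi.smul_apply,
    smul_eq_mul, Finset.sum_mul]
  exact Finset.sum_congr rfl fun k _ => by ring

lemma ro_smul_left (c : ℂ) (x y : Fin D → ℂ) : ro (c • x) y = c • ro x y := by
  ext i j; simp [ro, mul_assoc]

lemma dot_smul_right (c : ℂ) (x y : Fin D → ℂ) : dot x (c • y) = c * dot x y := by
  simp only [dot, Pi.smul_apply, smul_eq_mul, Finset.mul_sum]
  exact Finset.sum_congr rfl fun k _ => by ring

lemma dot_smul_left (c : ℂ) (x y : Fin D → ℂ) :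
    dot (c • x) y = (starRingEnd ℂ) c * dot x y := by
  simp only [dot, Pi.smul_apply, smul_eq_mul, _root_.map_mul, Finset.mul_sum]
  exact Finset.sum_congr rfl fun k _ => by ring

lemma dot_sum_left {s : Finset (Fin D)} (f : Fin D → Fin D → ℂ) (y : Fin D → ℂ) :
    dot (∑ n ∈ s, f n) y = ∑ n ∈ s, dot (f n) y := by
  simp only [dot, Finset.sum_apply, map_sum, Finset.sum_mul]
  exact Finset.sum_comm

lemma dot_sum_right {s : Finset (Fin D)} (x : Fin D → ℂ) (f : Fin D → Fin D → ℂ) :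
    dot x (∑ n ∈ s, f n) = ∑ n ∈ s, dot x (f n) := by
  simp only [dot, Finset.sum_apply, Finset.mul_sum]
  exact Finset.sum_comm

lemma dot_conjTranspose_mulVec (B : Matrix (Fin D) (Fin D) ℂ) (x y : Fin D → ℂ) :
    dot (Bᴴ *ᵥ x) y = dot x (B *ᵥ y) := by
  simp only [dot, Matrix.mulVec, dotProduct, Matrix.conjTranspose_apply, Complex.star_def, map_sum,
    _root_.map_mul, starRingEnd_self_apply, Finset.mul_sum, Finset.sum_mul]
  rw [Finset.sum_comm]
  refine Finset.sum_congr rfl fun k _ => Finset.sum_congr rfl fun l _ => by ring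


section Eigen
variable {H : Matrix (Fin D) (Fin D) ℂ} (hH : H.IsHermitian)

/-- abbreviation for eigenvectors as plain functions -/
def ev (n : Fin D) : Fin D → ℂ := ⇑(hH.eigenvectorBasis n)

lemma dot_ev (n m : Fin D) : dot (ev hH n) (ev hH m) = if n = m then 1 else 0 := by
  have h := orthonormal_iff_ite.mp hH.eigenvectorBasis.orthonormal n m
  rw [PiLp.inner_apply] at h
  simpa [dot, ev, RCLike.inner_apply, mul_comm] using h

lemma sum_ro_ev : (∑ n, ro (ev hH n) (ev hH n)) = 1 := by
  have h1 : (hH.eigenvectorUnitary : Matrix (Fin D) (Fin D) ℂ) *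
      star (hH.eigenvectorUnitary : Matrix (Fin D) (Fin D) ℂ) = 1 :=
    Matrix.mem_unitaryGroup_iff.mp hH.eigenvectorUnitary.2
  rw [← h1]
  ext i j
  simp [Matrix.mul_apply, Matrix.star_eq_conjTranspose, Matrix.conjTranspose_apply, ro, ev,
    Matrix.sum_apply, Complex.star_def]

lemma conj_ev_diag (w : Fin D → ℂ) :
    (hH.eigenvectorUnitary : Matrix (Fin D) (Fin D) ℂ) * Matrix.diagonal w *
      star (hH.eigenvectorUnitary : Matrix (Fin D) (Fin D) ℂ) = ∑ n, w n • ro (ev hH n) (ev hH n) := by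
  ext i j
  rw [Matrix.mul_apply]
  simp only [Matrix.mul_diagonal, Matrix.star_eq_conjTranspose, Matrix.conjTranspose_apply,
    Matrix.sum_apply, Matrix.smul_apply, ro, Matrix.of_apply,
    Matrix.IsHermitian.eigenvectorUnitary_apply, smul_eq_mul, Complex.star_def, ev]
  refine Finset.sum_congr rfl fun k _ => by ring

lemma exp_smul_H (z : ℂ) :
    NormedSpace.exp (z • H) =
      ∑ n, Complex.exp (z * (hH.eigenvalues n : ℂ)) • ro (ev hH n) (ev hH n) := by
  set U : Matrix (Fin D) (Fin D) ℂ := (hH.eigenvectorUnitary : Matrix (Fin D) (Fin D) ℂ) with hU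
  have h1 : U * star U = 1 := Matrix.mem_unitaryGroup_iff.mp hH.eigenvectorUnitary.2
  have hUnit : IsUnit U := ⟨⟨U, star U, h1, mul_eq_one_comm.mp h1⟩, rfl⟩
  have hinv : U⁻¹ = star U := Matrix.inv_eq_right_inv h1
  have hdiag : z • Matrix.diagonal (RCLike.ofReal ∘ hH.eigenvalues : Fin D → ℂ) =
      Matrix.diagonal (fun n => z * (hH.eigenvalues n : ℂ)) := by
    ext i j
    simp [Matrix.diagonal_apply, Function.comp, mul_ite]
  have h2 : z • H = U * Matrix.diagonal (fun n => z * (hH.eigenvalues n : ℂ)) * U⁻¹ := by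
    rw [hinv]
    conv_lhs => rw [hH.spectral_theorem]
    rw [← hdiag, Matrix.mul_smul, Matrix.smul_mul]
    rfl
  rw [h2, Matrix.exp_conj _ _ hUnit, Matrix.exp_diagonal, hinv, conj_ev_diag]
  refine Finset.sum_congr rfl fun n _ => ?_
  congr 1
  rw [Pi.exp_def, Complex.exp_eq_exp_ℂ]

end Eigen
end

section

variable {D : ℕ} {H : Matrix (Fin D) (Fin D) ℂ} (hH : H.IsHermitian)

/-- coefficients of `ψ` in the eigenbasis -/
def cc (ψ : Fin D → ℂ) (n : Fin D) : ℂ := dot (ev hH n) ψ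

/-- matrix elements of `B` in the eigenbasis -/
def bb (B : Matrix (Fin D) (Fin D) ℂ) (n m : Fin D) : ℂ := dot (ev hH n) (B *ᵥ ev hH m)

lemma mulVec_sum_smul (B : Matrix (Fin D) (Fin D) ℂ) (a : Fin D → ℂ) (y : Fin D → Fin D → ℂ) :
    B *ᵥ (∑ m, a m • y m) = ∑ m, a m • (B *ᵥ y m) := by
  ext i
  simp only [Matrix.mulVec, dotProduct, Finset.sum_apply, Pi.smul_apply, smul_eq_mul,
    Finset.mul_sum]
  rw [Finset.sum_comm]
  exact Finset.sum_congr rfl fun m _ => Finset.sum_congr rfl fun k _ => by ring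

lemma timeEvol_fun (t : ℝ) (ψ : EuclideanSpace ℂ (Fin D)) :
    (fun k => timeEvol H t ψ k) =
      ∑ n, (Complex.exp (-(Complex.I * t) * (hH.eigenvalues n : ℂ)) * cc hH (fun k => ψ k) n)
        • ev hH n := by
  have h0 : (fun k => timeEvol H t ψ k) =
      (NormedSpace.exp ((-(Complex.I * (t : ℂ))) • H)) *ᵥ fun k => ψ k := by
    funext k; rfl
  rw [h0, exp_smul_H hH]
  have h1 : (∑ n, Complex.exp (-(Complex.I * t) * (hH.eigenvalues n : ℂ)) •
      ro (ev hH n) (ev hH n)) *ᵥ (fun k => ψ k) =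
      ∑ n, Complex.exp (-(Complex.I * t) * (hH.eigenvalues n : ℂ)) •
        (ro (ev hH n) (ev hH n) *ᵥ fun k => ψ k) := by
    ext i
    simp only [Matrix.mulVec, dotProduct, Finset.sum_apply, Matrix.sum_apply,
      Matrix.smul_apply, Pi.smul_apply, smul_eq_mul, Finset.sum_mul, Finset.mul_sum]
    rw [Finset.sum_comm]
    exact Finset.sum_congr rfl fun n _ => Finset.sum_congr rfl fun k _ => by ring
  rw [h1]
  refine Finset.sum_congr rfl fun n _ => ?_
  rw [ro_mulVec, cc, smul_smul]

lemma sandwich_timeEvol (B : Matrix (Fin D) (Fin D) ℂ) (t : ℝ) (ψ : EuclideanSpace ℂ (Fin D)) :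
    sandwich B (timeEvol H t ψ) =
      ∑ n, ∑ m, Complex.exp (Complex.I * ((hH.eigenvalues n : ℂ) - (hH.eigenvalues m : ℂ)) * t) *
        ((starRingEnd ℂ) (cc hH (fun k => ψ k) n) * cc hH (fun k => ψ k) m * bb hH B n m) := by
  have h0 : sandwich B (timeEvol H t ψ) =
      dot (fun k => timeEvol H t ψ k) (B *ᵥ fun k => timeEvol H t ψ k) := rfl
  rw [h0, timeEvol_fun hH t ψ, mulVec_sum_smul, dot_sum_left]
  refine Finset.sum_congr rfl fun n _ => ?_
  rw [dot_smul_left, dot_sum_right, Finset.mul_sum]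
  refine Finset.sum_congr rfl fun m _ => ?_
  rw [dot_smul_right]
  have hconj : (starRingEnd ℂ) (Complex.exp (-(Complex.I * t) * (hH.eigenvalues n : ℂ))) =
      Complex.exp (Complex.I * t * (hH.eigenvalues n : ℂ)) := by
    rw [← Complex.exp_conj]
    congr 1
    simp [Complex.conj_ofReal]
  rw [_root_.map_mul, hconj]
  rw [show Complex.I * ((hH.eigenvalues n : ℂ) - (hH.eigenvalues m : ℂ)) * t =
    (Complex.I * t * (hH.eigenvalues n : ℂ)) + (-(Complex.I * t) * (hH.eigenvalues m : ℂ)) by ring]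
  rw [Complex.exp_add, bb]
  ring

lemma eigProj_eq (e : ℝ) :
    eigProj H hH e = ∑ n, (if hH.eigenvalues n = e then (1 : ℂ) else 0) •
      ro (ev hH n) (ev hH n) := by
  refine Finset.sum_congr rfl fun n _ => ?_
  by_cases h : hH.eigenvalues n = e <;> simp [h, outer, ro, ev]

lemma trace_ro_P_B_P (ψ : Fin D → ℂ) (B : Matrix (Fin D) (Fin D) ℂ) (n m : Fin D) :
    (ro ψ ψ * ro (ev hH n) (ev hH n) * B * ro (ev hH m) (ev hH m)).trace =
      (starRingEnd ℂ) (cc hH ψ n) * cc hH ψ m * bb hH B n m := by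
  rw [ro_mul_ro, Matrix.smul_mul, Matrix.smul_mul, ro_mul, ro_mul_ro, smul_smul,
    Matrix.trace_smul, trace_ro, dot_conjTranspose_mulVec]
  rw [cc, cc, bb, dot_conj ψ (ev hH n)]
  simp [smul_eq_mul]
  ring

lemma trace_outer_proj (ψ : Fin D → ℂ) (a : Fin D → ℂ) (B : Matrix (Fin D) (Fin D) ℂ) :
    (ro ψ ψ * (∑ n, a n • ro (ev hH n) (ev hH n)) * B *
      (∑ m, a m • ro (ev hH m) (ev hH m))).trace =
    ∑ n, ∑ m, (a n * a m) *
      ((starRingEnd ℂ) (cc hH ψ n) * cc hH ψ m * bb hH B n m) := by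
  have h1 : ro ψ ψ * (∑ n, a n • ro (ev hH n) (ev hH n)) * B *
      (∑ m, a m • ro (ev hH m) (ev hH m)) =
      ∑ n, ∑ m, (a n * a m) • (ro ψ ψ * ro (ev hH n) (ev hH n) * B * ro (ev hH m) (ev hH m)) := by
    simp only [Finset.mul_sum, Finset.sum_mul, Matrix.mul_smul, Matrix.smul_mul, Finset.smul_sum,
      smul_smul]
    rw [Finset.sum_comm]
    refine Finset.sum_congr rfl fun n _ => Finset.sum_congr rfl fun m _ => ?_
    rw [mul_comm (a m) (a n)]
  rw [h1, Matrix.trace_sum]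
  refine Finset.sum_congr rfl fun n _ => ?_
  rw [Matrix.trace_sum]
  refine Finset.sum_congr rfl fun m _ => ?_
  rw [Matrix.trace_smul, trace_ro_P_B_P hH ψ B n m, smul_eq_mul]

lemma MpsiB_expand (ψ : EuclideanSpace ℂ (Fin D)) (B : Matrix (Fin D) (Fin D) ℂ) :
    MpsiB H hH ψ B = ∑ n, ∑ m, (if hH.eigenvalues n = hH.eigenvalues m then (1:ℂ) else 0) *
      ((starRingEnd ℂ) (cc hH (fun k => ψ k) n) * cc hH (fun k => ψ k) m * bb hH B n m) := by
  have houter : outer ψ = ro (fun k => ψ k) (fun k => ψ k) := rfl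
  rw [MpsiB]
  have h1 : ∀ e ∈ eigSet H hH, (outer ψ * eigProj H hH e * B * eigProj H hH e).trace =
      ∑ n, ∑ m, ((if hH.eigenvalues n = e then (1:ℂ) else 0) *
        (if hH.eigenvalues m = e then (1:ℂ) else 0)) *
        ((starRingEnd ℂ) (cc hH (fun k => ψ k) n) * cc hH (fun k => ψ k) m * bb hH B n m) := by
    intro e _
    rw [houter, eigProj_eq hH e, trace_outer_proj hH]
  rw [Finset.sum_congr rfl h1, Finset.sum_comm]
  refine Finset.sum_congr rfl fun n _ => ?_
  rw [Finset.sum_comm]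
  refine Finset.sum_congr rfl fun m _ => ?_
  rw [Finset.sum_eq_single (hH.eigenvalues n)]
  · by_cases h : hH.eigenvalues n = hH.eigenvalues m <;> simp [h, eq_comm]
  · intro e _ hne
    simp [Ne.symm hne]
  · intro h
    exact absurd (Finset.mem_image_of_mem hH.eigenvalues (Finset.mem_univ n)) h

end

section

variable {D : ℕ}

lemma avg_exp (ω : ℝ) :
    Tendsto (fun T : ℝ => (T : ℂ)⁻¹ * ∫ t in Set.Ioc (0:ℝ) T, Complex.exp (Complex.I * ω * t))
      atTop (nhds (if ω = 0 then 1 else 0)) := by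
  by_cases hω : ω = 0
  · subst hω
    rw [if_pos rfl]
    simp only [Complex.ofReal_zero, mul_zero, zero_mul, Complex.exp_zero]
    have h : ∀ᶠ T : ℝ in atTop,
        (1 : ℂ) = (T : ℂ)⁻¹ * ∫ _t in Set.Ioc (0:ℝ) T, (1:ℂ) := by
      filter_upwards [eventually_gt_atTop (0:ℝ)] with T hT
      rw [setIntegral_const, Real.volume_real_Ioc_of_le (by linarith)]
      rw [sub_zero, Complex.real_smul, mul_one]
      rw [inv_mul_cancel₀ (by exact_mod_cast hT.ne')]
    exact Tendsto.congr' h tendsto_const_nhds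
  · rw [if_neg hω]
    have hc : (Complex.I * ω) ≠ 0 := by
      simp [Complex.I_ne_zero, Complex.ofReal_eq_zero, hω]
    apply squeeze_zero_norm' (a := fun T : ℝ => (2 / ‖Complex.I * ω‖) * T⁻¹)
    · filter_upwards [eventually_ge_atTop (1:ℝ)] with T hT
      have h0T : (0:ℝ) ≤ T := by linarith
      have hre : ∀ s : ℝ, (Complex.I * ω * s).re = 0 := by
        intro s
        simp [Complex.mul_re, Complex.mul_im]
      have hint : (∫ t in Set.Ioc (0:ℝ) T, Complex.exp (Complex.I * ω * t)) =
          (Complex.exp (Complex.I * ω * T) - Complex.exp (Complex.I * ω * 0)) / (Complex.I * ω) := by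
        rw [← intervalIntegral.integral_of_le h0T]
        have := integral_exp_mul_complex (a := (0:ℝ)) (b := T) hc
        simpa [mul_assoc] using this
      rw [hint, norm_mul, norm_div]
      have h1 : ‖Complex.exp (Complex.I * ω * T) - Complex.exp (Complex.I * ω * 0)‖ ≤ 2 := by
        refine (norm_sub_le _ _).trans ?_
        have e1 : ‖Complex.exp (Complex.I * ω * T)‖ = 1 := by
          rw [Complex.norm_exp, hre, Real.exp_zero]
        have e2 : ‖Complex.exp (Complex.I * ω * 0)‖ = 1 := by
          rw [mul_zero, Complex.exp_zero, norm_one]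
        rw [e1, e2]; norm_num
      have h2 : ‖(T:ℂ)⁻¹‖ = T⁻¹ := by
        rw [norm_inv, Complex.norm_real, Real.norm_eq_abs, _root_.abs_of_nonneg h0T]
      rw [h2, mul_comm]
      have habs : 0 < ‖Complex.I * ω‖ := by
        simpa using norm_pos_iff.mpr hc
      have hTinv : (0:ℝ) ≤ T⁻¹ := by positivity
      apply mul_le_mul ?_ le_rfl hTinv (by positivity)
      rw [div_le_div_iff₀ habs habs]
      exact mul_le_mul_of_nonneg_right h1 habs.le
    · have := tendsto_inv_atTop_zero (𝕜 := ℝ)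
      simpa using this.const_mul (2 / ‖Complex.I * ω‖)

variable {H : Matrix (Fin D) (Fin D) ℂ} (hH : H.IsHermitian)

lemma part1 (B : Matrix (Fin D) (Fin D) ℂ) (ψ₀ : EuclideanSpace ℂ (Fin D)) :
    Tendsto (fun T : ℝ => (T : ℂ)⁻¹ * ∫ t in Set.Ioc (0:ℝ) T, sandwich B (timeEvol H t ψ₀))
      atTop (nhds (MpsiB H hH ψ₀ B)) := by
  set C : Fin D → Fin D → ℂ := fun n m =>
    (starRingEnd ℂ) (cc hH (fun k => ψ₀ k) n) * cc hH (fun k => ψ₀ k) m * bb hH B n m with hC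
  have hcont : ∀ n m : Fin D, Continuous fun t : ℝ =>
      Complex.exp (Complex.I * ((hH.eigenvalues n : ℂ) - (hH.eigenvalues m : ℂ)) * t) * C n m :=
    fun n m => (Complex.continuous_exp.comp
      ((continuous_const).mul Complex.continuous_ofReal)).mul continuous_const
  have hint : ∀ (T : ℝ) (n m : Fin D), IntegrableOn (fun t : ℝ =>
      Complex.exp (Complex.I * ((hH.eigenvalues n : ℂ) - (hH.eigenvalues m : ℂ)) * t) * C n m)
      (Set.Ioc 0 T) volume :=
    fun T n m => (hcont n m).integrableOn_Ioc
  have hrw : ∀ T : ℝ, (T : ℂ)⁻¹ * ∫ t in Set.Ioc (0:ℝ) T, sandwich B (timeEvol H t ψ₀)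
      = ∑ n, ∑ m, (T : ℂ)⁻¹ * ∫ t in Set.Ioc (0:ℝ) T,
          Complex.exp (Complex.I * ((hH.eigenvalues n : ℂ) - (hH.eigenvalues m : ℂ)) * t) *
            C n m := by
    intro T
    simp only [sandwich_timeEvol hH B]
    rw [integral_finset_sum _ (fun n _ => integrable_finset_sum _ (fun m _ => hint T n m)),
      Finset.mul_sum]
    refine Finset.sum_congr rfl fun n _ => ?_
    rw [integral_finset_sum _ (fun m _ => hint T n m), Finset.mul_sum]
  refine Tendsto.congr (fun T => (hrw T).symm) ?_
  rw [MpsiB_expand hH ψ₀ B]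
  apply tendsto_finset_sum
  intro n _
  apply tendsto_finset_sum
  intro m _
  have h := (avg_exp (hH.eigenvalues n - hH.eigenvalues m)).mul_const (C n m)
  have hval : (if hH.eigenvalues n - hH.eigenvalues m = 0 then (1:ℂ) else 0)
      = (if hH.eigenvalues n = hH.eigenvalues m then (1:ℂ) else 0) := by
    simp [sub_eq_zero]
  rw [hval] at h
  refine Tendsto.congr (fun T => ?_) h
  rw [MeasureTheory.integral_mul_const, Complex.ofReal_sub, mul_assoc]

end

section

variable {D : ℕ}

lemma meas_coord (i : Fin D) : Measurable fun ψ : EuclideanSpace ℂ (Fin D) => ψ i :=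
  (measurable_pi_apply i).comp (comap_measurable (WithLp.equiv 2 (Fin D → ℂ)))

lemma meas_norm : Measurable fun ψ : EuclideanSpace ℂ (Fin D) => ‖ψ‖ := by
  have h : (fun ψ : EuclideanSpace ℂ (Fin D) => ‖ψ‖)
      = fun ψ => Real.sqrt (∑ i, ‖ψ i‖ ^ 2) := by
    funext ψ; exact EuclideanSpace.norm_eq ψ
  rw [h]
  exact (Finset.measurable_sum _ fun i _ => ((meas_coord i).norm.pow_const 2)).sqrt

lemma measurableSet_sphereOf (Pmu : Matrix (Fin D) (Fin D) ℂ) :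
    MeasurableSet (sphereOf Pmu) := by
  have h1 : MeasurableSet {ψ : EuclideanSpace ℂ (Fin D) | ‖ψ‖ = 1} :=
    meas_norm (measurableSet_singleton 1)
  have h2 : MeasurableSet {ψ : EuclideanSpace ℂ (Fin D) |
      ∀ j, Pmu.mulVec (fun k => ψ k) j = ψ j} := by
    have : {ψ : EuclideanSpace ℂ (Fin D) | ∀ j, Pmu.mulVec (fun k => ψ k) j = ψ j}
        = ⋂ j, {ψ : EuclideanSpace ℂ (Fin D) | Pmu.mulVec (fun k => ψ k) j = ψ j} := by
      ext ψ; simp [Set.mem_iInter]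
    rw [this]
    refine MeasurableSet.iInter fun j => ?_
    refine measurableSet_eq_fun ?_ (meas_coord j)
    have he : (fun ψ : EuclideanSpace ℂ (Fin D) => Pmu.mulVec (fun k => ψ k) j)
        = fun ψ : EuclideanSpace ℂ (Fin D) => ∑ k, Pmu j k * ψ k := by
      funext ψ; simp [Matrix.mulVec, dotProduct]
    rw [he]
    exact Finset.measurable_sum _ fun k _ => (meas_coord k).const_mul _
  exact h1.inter h2

lemma ae_sphere {Pmu : Matrix (Fin D) (Fin D) ℂ} {u : Measure (EuclideanSpace ℂ (Fin D))}
    (hu : IsUniformOn Pmu u) : ∀ᵐ ψ ∂u, ψ ∈ sphereOf Pmu := by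
  haveI := hu.1
  have hc : u (sphereOf Pmu)ᶜ = 0 := by
    rw [measure_compl (measurableSet_sphereOf Pmu) (measure_ne_top u _), hu.2.1, measure_univ]
    simp
  exact ae_iff.mpr hc

lemma abs_coord_le {ψ : EuclideanSpace ℂ (Fin D)} (hψ : ‖ψ‖ = 1) (k : Fin D) : ‖ψ k‖ ≤ 1 := by
  have h1 : ‖ψ k‖ ^ 2 ≤ ∑ i, ‖ψ i‖ ^ 2 :=
    Finset.single_le_sum (f := fun i => ‖ψ i‖ ^ 2) (fun i _ => by positivity) (Finset.mem_univ k)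
  have h2 : Real.sqrt (∑ i, ‖ψ i‖ ^ 2) = 1 := by rw [← EuclideanSpace.norm_eq ψ, hψ]
  have h3 : ‖ψ k‖ = Real.sqrt (‖ψ k‖ ^ 2) := (Real.sqrt_sq (norm_nonneg _)).symm
  rw [h3, ← h2]
  exact Real.sqrt_le_sqrt h1

lemma integrable_entry {Pmu : Matrix (Fin D) (Fin D) ℂ} {u : Measure (EuclideanSpace ℂ (Fin D))}
    (hu : IsUniformOn Pmu u) (i j : Fin D) :
    Integrable (fun ψ : EuclideanSpace ℂ (Fin D) => ψ i * (starRingEnd ℂ) (ψ j)) u := by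
  haveI := hu.1
  have hm : AEStronglyMeasurable (fun ψ : EuclideanSpace ℂ (Fin D) =>
      ψ i * (starRingEnd ℂ) (ψ j)) u :=
    ((meas_coord i).mul (Complex.continuous_conj.measurable.comp (meas_coord j))).aestronglyMeasurable
  refine Integrable.mono' (integrable_const 1) hm ?_
  filter_upwards [ae_sphere hu] with ψ hψ
  rw [norm_mul]
  have := abs_coord_le hψ.1 i
  have := abs_coord_le hψ.1 j
  have hsj : ‖(starRingEnd ℂ) (ψ j)‖ = ‖ψ j‖ := by
    simp
  nlinarith [norm_nonneg (ψ i), norm_nonneg (ψ j)]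

/-- the matrix `∫ |ψ⟩⟨ψ| du` -/
def Mmat (u : Measure (EuclideanSpace ℂ (Fin D))) : Matrix (Fin D) (Fin D) ℂ :=
  Matrix.of fun i j => ∫ ψ, ψ i * (starRingEnd ℂ) (ψ j) ∂u

variable {Pmu : Matrix (Fin D) (Fin D) ℂ} {u : Measure (EuclideanSpace ℂ (Fin D))}

lemma trace_Mmat (hu : IsUniformOn Pmu u) : (Mmat u).trace = 1 := by
  haveI := hu.1
  have h1 : (Mmat u).trace = ∫ ψ, (∑ i, ψ i * (starRingEnd ℂ) (ψ i)) ∂u := by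
    rw [integral_finset_sum _ (fun i _ => integrable_entry hu i i)]
    rfl
  rw [h1]
  have h2 : ∀ᵐ ψ ∂u, (∑ i, ψ i * (starRingEnd ℂ) (ψ i)) = (1:ℂ) := by
    filter_upwards [ae_sphere hu] with ψ hψ
    have hsum : (∑ i, ‖ψ i‖ ^ 2) = 1 := by
      have h := (EuclideanSpace.norm_eq ψ).symm.trans hψ.1
      exact Real.sqrt_eq_one.mp h
    calc ∑ i, ψ i * (starRingEnd ℂ) (ψ i) = ∑ i, ((‖ψ i‖ ^ 2 : ℝ) : ℂ) := by
          refine Finset.sum_congr rfl fun i _ => ?_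
          simp [Complex.mul_conj, Complex.normSq_eq_norm_sq]
      _ = ((∑ i, ‖ψ i‖ ^ 2 : ℝ) : ℂ) := by push_cast; ring
      _ = 1 := by rw [hsum]; norm_num
  rw [integral_congr_ae h2]
  simp

lemma P_mul_Mmat (hu : IsUniformOn Pmu u) : Pmu * Mmat u = Mmat u := by
  ext i j
  have h1 : (Pmu * Mmat u) i j = ∫ ψ, (∑ k, Pmu i k * (ψ k * (starRingEnd ℂ) (ψ j))) ∂u := by
    rw [Matrix.mul_apply, integral_finset_sum _ (fun k _ => (integrable_entry hu k j).const_mul _)]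
    refine Finset.sum_congr rfl fun k _ => ?_
    rw [integral_const_mul]
    rfl
  rw [h1]
  have h2 : ∀ᵐ ψ ∂u, (∑ k, Pmu i k * (ψ k * (starRingEnd ℂ) (ψ j)))
      = ψ i * (starRingEnd ℂ) (ψ j) := by
    filter_upwards [ae_sphere hu] with ψ hψ
    have hP := hψ.2 i
    calc ∑ k, Pmu i k * (ψ k * (starRingEnd ℂ) (ψ j))
        = (∑ k, Pmu i k * ψ k) * (starRingEnd ℂ) (ψ j) := by
          rw [Finset.sum_mul]; exact Finset.sum_congr rfl fun k _ => by ring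
      _ = ψ i * (starRingEnd ℂ) (ψ j) := by rw [show (∑ k, Pmu i k * ψ k)
            = Pmu.mulVec (fun k => ψ k) i from rfl, hP]
  rw [integral_congr_ae h2]
  rfl

lemma Mmat_mul_P (hu : IsUniformOn Pmu u) (hP : Pmu.IsHermitian) : Mmat u * Pmu = Mmat u := by
  ext i j
  have h1 : (Mmat u * Pmu) i j = ∫ ψ, (∑ k, (ψ i * (starRingEnd ℂ) (ψ k)) * Pmu k j) ∂u := by
    rw [Matrix.mul_apply, integral_finset_sum _ (fun k _ => (integrable_entry hu i k).mul_const _)]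
    refine Finset.sum_congr rfl fun k _ => ?_
    rw [integral_mul_const]
    rfl
  rw [h1]
  have h2 : ∀ᵐ ψ ∂u, (∑ k, (ψ i * (starRingEnd ℂ) (ψ k)) * Pmu k j)
      = ψ i * (starRingEnd ℂ) (ψ j) := by
    filter_upwards [ae_sphere hu] with ψ hψ
    have hPj := hψ.2 j
    calc ∑ k, (ψ i * (starRingEnd ℂ) (ψ k)) * Pmu k j
        = ψ i * (starRingEnd ℂ) (∑ k, Pmu j k * ψ k) := by
          rw [map_sum, Finset.mul_sum]
          refine Finset.sum_congr rfl fun k _ => ?_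
          have hherm : Pmu k j = (starRingEnd ℂ) (Pmu j k) := by
            have h := hP.apply j k
            rw [← h]
            simp
          rw [_root_.map_mul, hherm]
          ring
      _ = ψ i * (starRingEnd ℂ) (ψ j) := by
          rw [show (∑ k, Pmu j k * ψ k) = Pmu.mulVec (fun k => ψ k) j from rfl, hPj]
  rw [integral_congr_ae h2]
  rfl

lemma Mmat_conj (hu : IsUniformOn Pmu u) (U : Matrix (Fin D) (Fin D) ℂ)
    (hUmem : U ∈ Matrix.unitaryGroup (Fin D) ℂ) (hcomm : U * Pmu = Pmu * U) :
    U * Mmat u * Uᴴ = Mmat u := by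
  haveI := hu.1
  have hmap := hu.2.2 U hUmem hcomm
  set f : EuclideanSpace ℂ (Fin D) → EuclideanSpace ℂ (Fin D) :=
    fun ψ => (WithLp.equiv 2 (Fin D → ℂ)).symm (U.mulVec fun k => ψ k) with hf
  have hcoordf : ∀ (ψ : EuclideanSpace ℂ (Fin D)) (j : Fin D), f ψ j = ∑ k, U j k * ψ k := by
    intro ψ j; rfl
  have hfm : Measurable f := by
    rw [measurable_iff_comap_le]
    show MeasurableSpace.comap f (MeasurableSpace.comap (WithLp.equiv 2 (Fin D → ℂ)) MeasurableSpace.pi) ≤ _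
    rw [MeasurableSpace.comap_comp, ← measurable_iff_comap_le]
    apply measurable_pi_lambda
    intro j
    show Measurable fun ψ => f ψ j
    have he : (fun ψ : EuclideanSpace ℂ (Fin D) => f ψ j)
        = fun ψ : EuclideanSpace ℂ (Fin D) => ∑ k, U j k * ψ k := by
      funext ψ; exact hcoordf ψ j
    rw [he]
    exact Finset.measurable_sum _ fun k _ => (meas_coord k).const_mul _
  ext i j
  have key : (∫ ψ, ψ i * (starRingEnd ℂ) (ψ j) ∂u)
      = ∫ ψ, f ψ i * (starRingEnd ℂ) (f ψ j) ∂u := by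
    conv_lhs => rw [← hmap]
    exact integral_map hfm.aemeasurable
      ((meas_coord i).mul (Complex.continuous_conj.measurable.comp
        (meas_coord j))).aestronglyMeasurable
  have hexp : (fun ψ : EuclideanSpace ℂ (Fin D) => f ψ i * (starRingEnd ℂ) (f ψ j))
      = fun ψ : EuclideanSpace ℂ (Fin D) =>
        ∑ k, ∑ l, (U i k * (starRingEnd ℂ) (U j l)) * (ψ k * (starRingEnd ℂ) (ψ l)) := by
    funext ψ
    rw [hcoordf ψ i, hcoordf ψ j, map_sum, Finset.sum_mul_sum]
    refine Finset.sum_congr rfl fun k _ => Finset.sum_congr rfl fun l _ => ?_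
    rw [_root_.map_mul]
    ring
  have hR : Mmat u i j = ∑ k, ∑ l, (U i k * (starRingEnd ℂ) (U j l)) *
      ∫ ψ, ψ k * (starRingEnd ℂ) (ψ l) ∂u := by
    show (∫ ψ, ψ i * (starRingEnd ℂ) (ψ j) ∂u) = _
    rw [key, hexp]
    rw [integral_finset_sum _ (fun k _ => integrable_finset_sum _
      (fun l _ => (integrable_entry hu k l).const_mul _))]
    refine Finset.sum_congr rfl fun k _ => ?_
    rw [integral_finset_sum _ (fun l _ => (integrable_entry hu k l).const_mul _)]
    exact Finset.sum_congr rfl fun l _ => integral_const_mul _ _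
  have hM : (U * Mmat u * Uᴴ) i j = ∑ k, ∑ l, (U i k * (starRingEnd ℂ) (U j l)) *
      ∫ ψ, ψ k * (starRingEnd ℂ) (ψ l) ∂u := by
    simp only [Matrix.mul_apply, Matrix.conjTranspose_apply, Finset.sum_mul, Complex.star_def]
    rw [Finset.sum_comm]
    refine Finset.sum_congr rfl fun k _ => Finset.sum_congr rfl fun l _ => ?_
    rw [show Mmat u k l = ∫ ψ, ψ k * (starRingEnd ℂ) (ψ l) ∂u from rfl]
    ring
  rw [hM, hR]

end

section

variable {D : ℕ}

lemma sandwich_id {V : Matrix (Fin D) (Fin D) ℂ} (hV2 : star V * V = 1)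
    (A : Matrix (Fin D) (Fin D) ℂ) : star V * (V * A * star V) * V = A := by
  calc star V * (V * A * star V) * V = (star V * V) * A * (star V * V) := by
        simp only [Matrix.mul_assoc]
    _ = A := by rw [hV2, Matrix.one_mul, Matrix.mul_one]

lemma unitary_sandwich_cancel {V A B : Matrix (Fin D) (Fin D) ℂ}
    (hV2 : star V * V = 1) (h : V * A * star V = V * B * star V) : A = B := by
  have h2 := congrArg (fun X => star V * X * V) h
  simpa only [sandwich_id hV2] using h2

lemma M_eq_smul_P (Pm : Matrix (Fin D) (Fin D) ℂ) (hP : Pm.IsHermitian)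
    (hidem : Pm * Pm = Pm) (M : Matrix (Fin D) (Fin D) ℂ)
    (hPM : Pm * M = M) (hMP : M * Pm = M)
    (hinv : ∀ U ∈ Matrix.unitaryGroup (Fin D) ℂ, U * Pm = Pm * U → U * M * Uᴴ = M)
    (htr : M.trace = 1) (d : ℕ) (htrP : Pm.trace = (d : ℂ)) :
    M = ((d : ℂ))⁻¹ • Pm := by
  set V : Matrix (Fin D) (Fin D) ℂ := (hP.eigenvectorUnitary : Matrix (Fin D) (Fin D) ℂ)
    with hVdef
  have hV1 : V * star V = 1 := Matrix.mem_unitaryGroup_iff.mp hP.eigenvectorUnitary.2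
  have hV2 : star V * V = 1 := Matrix.mem_unitaryGroup_iff'.mp hP.eigenvectorUnitary.2
  set g : Fin D → ℝ := hP.eigenvalues with hgdef
  set Dg : Matrix (Fin D) (Fin D) ℂ := Matrix.diagonal (RCLike.ofReal ∘ g) with hDdef
  have hspec : Pm = V * Dg * star V := hP.spectral_theorem
  have hcan1 : ∀ X : Matrix (Fin D) (Fin D) ℂ, star V * (V * X) = X := fun X => by
    rw [← Matrix.mul_assoc, hV2, Matrix.one_mul]
  have hcan2 : ∀ X : Matrix (Fin D) (Fin D) ℂ, V * (star V * X) = X := fun X => by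
    rw [← Matrix.mul_assoc, hV1, Matrix.one_mul]
  have hDD : Dg * Dg = Dg := by
    apply unitary_sandwich_cancel hV2
    have h1 : V * (Dg * Dg) * star V = Pm * Pm := by
      rw [hspec]; simp only [Matrix.mul_assoc, hcan1]
    rw [h1, hidem, hspec]
  have hg01 : ∀ n, g n = 0 ∨ g n = 1 := by
    intro n
    have h := congrArg (fun X => X n n) hDD
    simp only [hDdef, Matrix.diagonal_mul_diagonal, Matrix.diagonal_apply_eq, Function.comp,
      Pi.mul_apply] at h
    have hr : g n * g n = g n := by exact_mod_cast h
    have h2 : g n * (g n - 1) = 0 := by linear_combination hr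
    rcases mul_eq_zero.mp h2 with h3 | h3
    · exact Or.inl h3
    · exact Or.inr (sub_eq_zero.mp h3)
  set N : Matrix (Fin D) (Fin D) ℂ := star V * M * V with hNdef
  have hMN : M = V * N * star V := by
    rw [hNdef]
    simp only [Matrix.mul_assoc, hcan2, hV1, mul_one]
  have hDN : Dg * N = N := by
    conv_rhs => rw [hNdef, ← hPM, hspec]
    rw [hNdef]
    simp only [Matrix.mul_assoc, hcan1]
  have hNinv : ∀ W ∈ Matrix.unitaryGroup (Fin D) ℂ, W * Dg = Dg * W →
      W * N * star W = N := by
    intro W hW hWD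
    have hWmem1 : W * star W = 1 := Matrix.mem_unitaryGroup_iff.mp hW
    set U : Matrix (Fin D) (Fin D) ℂ := V * W * star V with hUdef
    have hstarU : star U = V * star W * star V := by
      rw [hUdef]
      simp only [Matrix.star_mul, star_star, Matrix.mul_assoc]
    have hcanW1 : ∀ X : Matrix (Fin D) (Fin D) ℂ, W * (star W * X) = X := fun X => by
      rw [← Matrix.mul_assoc, hWmem1, Matrix.one_mul]
    have hUmem : U ∈ Matrix.unitaryGroup (Fin D) ℂ := by
      rw [Matrix.mem_unitaryGroup_iff, hstarU, hUdef]
      simp only [Matrix.mul_assoc, hcan1, hcanW1, hV1]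
    have hUP : U * Pm = Pm * U := by
      have h5 : W * (Dg * star V) = Dg * (W * star V) := by
        rw [← Matrix.mul_assoc, hWD, Matrix.mul_assoc]
      rw [hspec, hUdef]
      simp only [Matrix.mul_assoc, hcan1]
      rw [h5]
    have h := hinv U hUmem hUP
    rw [← Matrix.star_eq_conjTranspose] at h
    have h3 : star V * (U * M * star U) * V = W * N * star W := by
      rw [hUdef, hstarU, hNdef]
      simp only [Matrix.mul_assoc, hcan1, hV2, mul_one]
    calc W * N * star W = star V * (U * M * star U) * V := h3.symm
      _ = star V * M * V := by rw [h]
      _ = N := by rw [hNdef]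
  have hoff : ∀ i j, i ≠ j → N i j = 0 := by
    intro i j hij
    set s : Fin D → ℂ := fun k => if k = i then -1 else 1 with hs
    have hss : ∀ k, s k * star (s k) = 1 := by
      intro k
      by_cases h : k = i <;> simp [hs, h]
    have hWmem : Matrix.diagonal s ∈ Matrix.unitaryGroup (Fin D) ℂ := by
      rw [Matrix.mem_unitaryGroup_iff, Matrix.star_eq_conjTranspose,
        Matrix.diagonal_conjTranspose, Matrix.diagonal_mul_diagonal]
      ext a b
      rcases eq_or_ne a b with rfl | hab
      · rw [Matrix.diagonal_apply_eq, Matrix.one_apply_eq]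
        simpa using hss a
      · rw [Matrix.diagonal_apply_ne _ hab, Matrix.one_apply_ne hab]
    have hWD : Matrix.diagonal s * Dg = Dg * Matrix.diagonal s := by
      rw [hDdef, Matrix.diagonal_mul_diagonal, Matrix.diagonal_mul_diagonal]
      exact congrArg Matrix.diagonal (funext fun k => mul_comm _ _)
    have h := hNinv (Matrix.diagonal s) hWmem hWD
    have h2 := congrArg (fun X => X i j) h
    rw [Matrix.star_eq_conjTranspose, Matrix.diagonal_conjTranspose,
      Matrix.mul_diagonal, Matrix.diagonal_mul] at h2
    simp only [Pi.star_apply] at h2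
    have hsi : s i = -1 := by simp [hs]
    have hsj : star (s j) = 1 := by
      have hji : j ≠ i := fun h => hij h.symm
      simp [hs, hji]
    rw [hsi, hsj, mul_one] at h2
    have h4 : (2:ℂ) * N i j = 0 := by linear_combination -h2
    exact (mul_eq_zero.mp h4).resolve_left two_ne_zero
  have hdiagEq : ∀ n m, g n = g m → N n n = N m m := by
    intro n m hg
    set σ := Equiv.swap n m with hσ
    have hσσ : ∀ x, σ (σ x) = x := fun x => Equiv.swap_apply_self n m x
    set W : Matrix (Fin D) (Fin D) ℂ := Matrix.of (fun i j => if σ i = j then (1:ℂ) else 0)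
      with hWdef
    have hWapp : ∀ (A : Matrix (Fin D) (Fin D) ℂ) i j, (W * A) i j = A (σ i) j := by
      intro A i j
      rw [Matrix.mul_apply]
      simp [hWdef, ite_mul, Finset.sum_ite_eq]
    have hAW : ∀ (A : Matrix (Fin D) (Fin D) ℂ) i j, (A * W) i j = A i (σ j) := by
      intro A i j
      rw [Matrix.mul_apply]
      have he : ∀ k, (if σ k = j then (1:ℂ) else 0) = (if k = σ j then 1 else 0) := by
        intro k
        by_cases h : k = σ j
        · subst h; simp [hσσ]
        · have h' : σ k ≠ j := by
            intro hc
            exact h (by rw [← hc, hσσ])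
          simp [h, h']
      simp [hWdef, he, mul_ite, Finset.sum_ite_eq']
    have hstarW : star W = W := by
      rw [Matrix.star_eq_conjTranspose]
      ext i j
      rw [Matrix.conjTranspose_apply]
      by_cases h : σ i = j
      · have h' : σ j = i := by rw [← h, hσσ]
        simp [hWdef, h, h']
      · have h' : σ j ≠ i := by
          intro hc
          exact h (by rw [← hc, hσσ])
        simp [hWdef, h, h']
    have hWmem : W ∈ Matrix.unitaryGroup (Fin D) ℂ := by
      rw [Matrix.mem_unitaryGroup_iff, hstarW]
      ext i j
      rw [hWapp W i j]
      by_cases h : i = j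
      · subst h; simp [hWdef, hσσ, Matrix.one_apply]
      · have h' : σ (σ i) ≠ j := by rw [hσσ]; exact h
        simp [hWdef, h, h', Matrix.one_apply]
    have hgσ : ∀ k, g (σ k) = g k := by
      intro k
      rcases eq_or_ne k n with rfl | hkn
      · rw [hσ, Equiv.swap_apply_left]; exact hg.symm
      rcases eq_or_ne k m with rfl | hkm
      · rw [hσ, Equiv.swap_apply_right]; exact hg
      · rw [hσ, Equiv.swap_apply_of_ne_of_ne hkn hkm]
    have hWD : W * Dg = Dg * W := by
      ext i j
      rw [hWapp, hDdef, Matrix.diagonal_mul]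
      by_cases h : σ i = j
      · subst h
        rw [Matrix.diagonal_apply_eq]
        simp [hWdef, Function.comp, hgσ]
      · rw [Matrix.diagonal_apply_ne _ h]
        simp [hWdef, h]
    have h := hNinv W hWmem hWD
    have hσn : σ n = m := Equiv.swap_apply_left n m
    calc N n n = (W * N * star W) n n := by rw [h]
      _ = (W * N) n (σ n) := by rw [hstarW, hAW]
      _ = N (σ n) (σ n) := by rw [hWapp]
      _ = N m m := by rw [hσn]
  have hzero : ∀ n, g n = 0 → N n n = 0 := by
    intro n hn
    have h := congrArg (fun X => X n n) hDN
    rw [hDdef, Matrix.diagonal_mul] at h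
    have : ((RCLike.ofReal ∘ g : Fin D → ℂ)) n = 0 := by simp [Function.comp, hn]
    rw [this, zero_mul] at h
    exact h.symm
  by_cases hex : ∃ n₀, g n₀ = 1
  · obtain ⟨n₀, hn₀⟩ := hex
    obtain ⟨c, hc⟩ : ∃ c : ℂ, N n₀ n₀ = c := ⟨N n₀ n₀, rfl⟩
    have hNc : N = c • Dg := by
      ext i j
      rcases eq_or_ne i j with rfl | hij
      · rw [hDdef, Matrix.smul_apply, Matrix.diagonal_apply_eq]
        rcases hg01 i with h0 | h1
        · rw [hzero i h0]
          simp [Function.comp, h0]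
        · rw [hdiagEq i n₀ (h1.trans hn₀.symm), hc]
          simp [Function.comp, h1]
      · rw [hoff i j hij, hDdef, Matrix.smul_apply, Matrix.diagonal_apply_ne _ hij]
        simp
    have hMc : M = c • Pm := by
      rw [hMN, hNc, Matrix.mul_smul, Matrix.smul_mul, ← hspec]
    have htrc : c * (d : ℂ) = 1 := by
      have h := htr
      rw [hMc, Matrix.trace_smul, htrP, smul_eq_mul] at h
      exact h
    have hcd : c = ((d : ℂ))⁻¹ := eq_inv_of_mul_eq_one_left htrc
    rw [hMc, hcd]
  · push_neg at hex
    have hg0 : ∀ n, g n = 0 := fun n => (hg01 n).resolve_right (hex n)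
    have hD0 : Dg = 0 := by
      rw [hDdef]
      ext i j
      rcases eq_or_ne i j with rfl | hij
      · rw [Matrix.diagonal_apply_eq]; simp [Function.comp, hg0]
      · rw [Matrix.diagonal_apply_ne _ hij]; simp
    have hP0 : Pm = 0 := by rw [hspec, hD0, Matrix.mul_zero, Matrix.zero_mul]
    have hM0 : M = 0 := by rw [← hPM, hP0, Matrix.zero_mul]
    rw [hM0, Matrix.trace_zero] at htr
    exact absurd htr.symm one_ne_zero

end

section


lemma part2 {D : ℕ} {ι : Type} [Fintype ι]
    (P : ι → Matrix (Fin D) (Fin D) ℂ) (d : ι → ℕ) (hdecomp : IsOrthDecomp P d)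
    {H : Matrix (Fin D) (Fin D) ℂ} (hH : H.IsHermitian) (B : Matrix (Fin D) (Fin D) ℂ)
    (μ : ι) (u : Measure (EuclideanSpace ℂ (Fin D))) (hu : IsUniformOn (P μ) u) :
    ∫ ψ₀, MpsiB H hH ψ₀ B ∂u = MmuB H hH (P μ) B (d μ) := by
  set K : Matrix (Fin D) (Fin D) ℂ :=
    ∑ e ∈ eigSet H hH, eigProj H hH e * B * eigProj H hH e with hK
  have h1 : ∀ ψ : EuclideanSpace ℂ (Fin D), MpsiB H hH ψ B
      = ∑ i, ∑ j, K j i * (ψ i * (starRingEnd ℂ) (ψ j)) := by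
    intro ψ
    have e1 : MpsiB H hH ψ B = (outer ψ * K).trace := by
      rw [hK, Finset.mul_sum, Matrix.trace_sum, MpsiB]
      refine Finset.sum_congr rfl fun e _ => ?_
      congr 1
      simp only [Matrix.mul_assoc]
    rw [e1, Matrix.trace]
    refine Finset.sum_congr rfl fun i _ => ?_
    show (outer ψ * K) i i = _
    rw [Matrix.mul_apply]
    refine Finset.sum_congr rfl fun j _ => ?_
    show ψ i * (starRingEnd ℂ) (ψ j) * K j i = _
    ring
  have h2 : ∫ ψ, MpsiB H hH ψ B ∂u = ∑ i, ∑ j, K j i * (Mmat u i j) := by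
    calc ∫ ψ, MpsiB H hH ψ B ∂u
        = ∫ ψ, (∑ i, ∑ j, K j i * (ψ i * (starRingEnd ℂ) (ψ j))) ∂u :=
          integral_congr_ae (Filter.Eventually.of_forall fun ψ => h1 ψ)
      _ = ∑ i, ∫ ψ, (∑ j, K j i * (ψ i * (starRingEnd ℂ) (ψ j))) ∂u :=
          integral_finset_sum _ (fun i _ => integrable_finset_sum _
            (fun j _ => (integrable_entry hu i j).const_mul _))
      _ = ∑ i, ∑ j, ∫ ψ, K j i * (ψ i * (starRingEnd ℂ) (ψ j)) ∂u :=
          Finset.sum_congr rfl fun i _ =>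
            integral_finset_sum _ (fun j _ => (integrable_entry hu i j).const_mul _)
      _ = ∑ i, ∑ j, K j i * (Mmat u i j) :=
          Finset.sum_congr rfl fun i _ => Finset.sum_congr rfl fun j _ => integral_const_mul _ _
  obtain ⟨hherm, hidem, -, -, htrP⟩ := hdecomp
  have hMmat : Mmat u = ((d μ : ℂ))⁻¹ • P μ :=
    M_eq_smul_P (P μ) (hherm μ) (hidem μ) (Mmat u) (P_mul_Mmat hu) (Mmat_mul_P hu (hherm μ))
      (fun U hU hcomm => Mmat_conj hu U hU hcomm) (trace_Mmat hu) (d μ) (htrP μ)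
  have h3 : MmuB H hH (P μ) B (d μ) = ((d μ : ℂ))⁻¹ * (P μ * K).trace := by
    rw [MmuB]
    congr 1
    rw [hK, Finset.mul_sum, Matrix.trace_sum]
    refine Finset.sum_congr rfl fun e _ => ?_
    congr 1
    simp only [Matrix.mul_assoc]
  have h4 : (P μ * K).trace = ∑ i, ∑ j, K j i * P μ i j := by
    rw [Matrix.trace]
    refine Finset.sum_congr rfl fun i _ => ?_
    show (P μ * K) i i = ∑ j, K j i * P μ i j
    rw [Matrix.mul_apply]
    exact Finset.sum_congr rfl fun j _ => mul_comm _ _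
  rw [h2, hMmat, h3, h4, Finset.mul_sum]
  refine Finset.sum_congr rfl fun i _ => ?_
  rw [Finset.mul_sum]
  refine Finset.sum_congr rfl fun j _ => ?_
  rw [Matrix.smul_apply, smul_eq_mul]
  ring

end

end GNTAux

open GNT in
/-- The time average of `t ↦ ⟨ψ_t|B|ψ_t⟩` exists and equals `M_{ψ₀B}`, and `M_{μB}` is the
average of `M_{ψ₀B}` over the uniform measure on the unit sphere of `ℋ_μ`. -/
theorem stmt2 {D : ℕ} {ι : Type} [Fintype ι]
    (P : ι → Matrix (Fin D) (Fin D) ℂ) (d : ι → ℕ) (hdecomp : IsOrthDecomp P d)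
    (H : Matrix (Fin D) (Fin D) ℂ) (hH : H.IsHermitian)
    (B : Matrix (Fin D) (Fin D) ℂ)
    (μ : ι) (u : Measure (EuclideanSpace ℂ (Fin D))) (hu : IsUniformOn (P μ) u) :
    (∀ ψ₀ : EuclideanSpace ℂ (Fin D), ‖ψ₀‖ = 1 →
      Filter.Tendsto
        (fun T : ℝ => (T : ℂ)⁻¹ * ∫ t in Set.Ioc (0:ℝ) T, sandwich B (timeEvol H t ψ₀))
        Filter.atTop (nhds (MpsiB H hH ψ₀ B))) ∧
    ∫ ψ₀, MpsiB H hH ψ₀ B ∂u = MmuB H hH (P μ) B (d μ) := by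
  constructor
  · intro ψ₀ _
    exact GNTAux.part1 hH B ψ₀
  · exact GNTAux.part2 P d hdecomp hH B μ u hu
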